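/- For every n ∈ ℕ, the n-th Hermite function e_n(x) = He_n(√2·x)·exp(−x²/2) is twice differentiable on ℝ and satisfies the harmonic oscillator eigenvalue equation −e_n''(x) + x²·e_n(x) = (2n+1)·e_n(x) for every x ∈ ℝ. -/

import Mathlib

open Polynomial Real

noncomputable def hermiteFun (n : ℕ) (x : ℝ) : ℝ :=
  Polynomial.aeval (Real.sqrt 2 * x) (Polynomial.hermite n) * Real.exp (-x ^ 2 / 2)

lemma derivative_hermite_succ (n : ℕ) :
    derivative (hermite (n + 1)) = C ((n : ℤ) + 1) * hermite n := by
  induction n with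
  | zero => simp [hermite_one, hermite_zero]
  | succ n ih =>
      rw [hermite_succ (n + 1), derivative_sub, derivative_mul, derivative_X, ih,
        derivative_C_mul]
      simp only [Nat.cast_add, Nat.cast_one, map_add, map_one]
      rw [hermite_succ n]
      ring

lemma hermite_ode (n : ℕ) :
    derivative (derivative (hermite n)) =
      X * derivative (hermite n) - C (n : ℤ) * hermite n := by
  cases n with
  | zero => simp [hermite_zero]
  | succ n =>
      rw [derivative_hermite_succ, derivative_C_mul]
      simp only [Nat.cast_add, Nat.cast_one, map_add, map_one]
      rw [hermite_succ n]
      ring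

/-- helper: derivative of `x ↦ Q.eval (√2 x) * exp (-x²/2)`. -/
lemma hasDerivAt_aux (Q : ℝ[X]) (x : ℝ) :
    HasDerivAt (fun x : ℝ => Q.eval (Real.sqrt 2 * x) * Real.exp (-x ^ 2 / 2))
      ((Real.sqrt 2 * Q.derivative.eval (Real.sqrt 2 * x)
        - x * Q.eval (Real.sqrt 2 * x)) * Real.exp (-x ^ 2 / 2)) x := by
  have hlin : HasDerivAt (fun x : ℝ => Real.sqrt 2 * x) (Real.sqrt 2) x := by
    simpa using (hasDerivAt_id x).const_mul (Real.sqrt 2)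
  have hP : HasDerivAt (fun x : ℝ => Q.eval (Real.sqrt 2 * x))
      (Real.sqrt 2 * Q.derivative.eval (Real.sqrt 2 * x)) x := by
    simpa [Function.comp_def, mul_comm] using (Q.hasDerivAt (Real.sqrt 2 * x)).comp x hlin
  have hexp : HasDerivAt (fun x : ℝ => Real.exp (-x ^ 2 / 2))
      (-x * Real.exp (-x ^ 2 / 2)) x := by
    have h1 : HasDerivAt (fun x : ℝ => -x ^ 2 / 2) (-x) x := by
      have : HasDerivAt (fun x : ℝ => -x ^ 2 / 2) (-((2 : ℕ) * x ^ (2 - 1)) / 2) x :=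
        ((hasDerivAt_pow 2 x).neg).div_const 2
      convert this using 1
      push_cast; ring
    simpa [mul_comm] using h1.exp
  have : HasDerivAt (fun x : ℝ => Q.eval (Real.sqrt 2 * x) * Real.exp (-x ^ 2 / 2))
      (Real.sqrt 2 * Q.derivative.eval (Real.sqrt 2 * x) * Real.exp (-x ^ 2 / 2)
        + Q.eval (Real.sqrt 2 * x) * (-x * Real.exp (-x ^ 2 / 2))) x := hP.mul hexp
  convert this using 1
  ring

/-- The `n`-th Hermite function is twice differentiable and satisfies the harmonic
oscillator eigenvalue equation `-e_n'' + x² e_n = (2n+1) e_n`. -/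
theorem hermiteFun_harmonic_oscillator (n : ℕ) :
    (∀ x : ℝ, DifferentiableAt ℝ (hermiteFun n) x) ∧
    (∀ x : ℝ, DifferentiableAt ℝ (deriv (hermiteFun n)) x) ∧
    (∀ x : ℝ, -(deriv (deriv (hermiteFun n)) x) + x ^ 2 * hermiteFun n x =
      (2 * (n : ℝ) + 1) * hermiteFun n x) := by
  set P : ℝ[X] := (hermite n).map (algebraMap ℤ ℝ) with hPdef
  have hfun : hermiteFun n = fun x : ℝ => P.eval (Real.sqrt 2 * x) * Real.exp (-x ^ 2 / 2) := by
    funext x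
    simp [hermiteFun, hPdef, eval_map, aeval_def]
  set Q : ℝ[X] := C (Real.sqrt 2) * P.derivative - C (Real.sqrt 2 / 2) * (X * P) with hQdef
  have h2 : Real.sqrt 2 * Real.sqrt 2 = 2 := Real.mul_self_sqrt (by norm_num)
  have hQeval : ∀ x : ℝ, Q.eval (Real.sqrt 2 * x)
      = Real.sqrt 2 * P.derivative.eval (Real.sqrt 2 * x) - x * P.eval (Real.sqrt 2 * x) := by
    intro x
    simp only [hQdef, eval_sub, eval_mul, eval_C, eval_X]
    linear_combination (-(x * P.eval (Real.sqrt 2 * x)) / 2) * h2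
  have hd1 : ∀ x : ℝ, HasDerivAt (hermiteFun n)
      (Q.eval (Real.sqrt 2 * x) * Real.exp (-x ^ 2 / 2)) x := by
    intro x
    rw [hfun, hQeval]
    exact hasDerivAt_aux P x
  have hderiv1 : deriv (hermiteFun n)
      = fun x : ℝ => Q.eval (Real.sqrt 2 * x) * Real.exp (-x ^ 2 / 2) := by
    funext x; exact (hd1 x).deriv
  have hd2 : ∀ x : ℝ, HasDerivAt (deriv (hermiteFun n))
      ((Real.sqrt 2 * Q.derivative.eval (Real.sqrt 2 * x)
        - x * Q.eval (Real.sqrt 2 * x)) * Real.exp (-x ^ 2 / 2)) x := by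
    intro x
    rw [hderiv1]
    exact hasDerivAt_aux Q x
  refine ⟨fun x => (hd1 x).differentiableAt, fun x => (hd2 x).differentiableAt, fun x => ?_⟩
  rw [(hd2 x).deriv]
  simp only [hfun]
  have hode : P.derivative.derivative.eval (Real.sqrt 2 * x)
      = (Real.sqrt 2 * x) * P.derivative.eval (Real.sqrt 2 * x)
        - (n : ℝ) * P.eval (Real.sqrt 2 * x) := by
    have := congrArg (fun p : ℤ[X] => ((p.map (algebraMap ℤ ℝ)).eval (Real.sqrt 2 * x)))
      (hermite_ode n)
    simpa [hPdef, Polynomial.derivative_map, Polynomial.map_mul, Polynomial.map_sub,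
      eval_mul, eval_sub] using this
  have hQ' : Q.derivative = C (Real.sqrt 2) * P.derivative.derivative
      - C (Real.sqrt 2 / 2) * (P + X * P.derivative) := by
    simp only [hQdef, derivative_sub, derivative_mul, derivative_C, derivative_X, zero_mul,
      one_mul, zero_add]
  rw [hQeval, hQ']
  simp only [eval_sub, eval_mul, eval_add, eval_C, eval_X]
  rw [hode]
  set A := P.eval (Real.sqrt 2 * x)
  set B := P.derivative.eval (Real.sqrt 2 * x)
  linear_combination ((-(Real.sqrt 2 * x * B)) / 2 + ((n : ℝ) + 1 / 2) * A)
    * Real.exp (-x ^ 2 / 2) * h2
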